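/- arXiv:2002.10999 — 2 statements merged into one kernel-verified Lean document; each statement's English description precedes it below -/
import Mathlib

section
/- Let w₁, …, wₙ be strictly positive reals with Σᵢ wᵢ = 1, and let (m₁, s₁), …, (mₙ, sₙ) be pairs of reals with sᵢ > 0 for all i. Suppose there exist indices i ≠ j such that mᵢ·sⱼ ≠ mⱼ·sᵢ (i.e., the moment pairs do not all lie on a single line through the origin). Let m = Σᵢ wᵢ mᵢ and s = Σᵢ wᵢ sᵢ. Then the inequality is strict: Σᵢ wᵢ·(1 − mᵢ²/sᵢ) < 1 − m²/s. -/
lemma tangent_le (l x y : ℝ) (hy : 0 < y) : 2*l*x - l^2*y ≤ x^2/y := by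
  have h : x^2/y - (2*l*x - l^2*y) = (x - l*y)^2 / y := by field_simp; ring
  nlinarith [sq_nonneg (x - l*y), div_nonneg (sq_nonneg (x - l*y)) hy.le]

lemma tangent_lt (l x y : ℝ) (hy : 0 < y) (hx : x ≠ l*y) : 2*l*x - l^2*y < x^2/y := by
  have h : x^2/y - (2*l*x - l^2*y) = (x - l*y)^2 / y := by field_simp; ring
  have hne : x - l*y ≠ 0 := sub_ne_zero.mpr hx
  have h2 : 0 < (x - l*y)^2 / y := div_pos (by positivity) hy
  linarith

/-- Strict part of Theorem 1 (real-analytic form): if the moment pairs do not all lie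
on a single line through the origin, the weighted sum of the component Cantelli bounds
is strictly smaller than the mixture Cantelli bound. -/
theorem weighted_cantelli_lt_mixture_cantelli
    (n : ℕ) (w : Fin n → ℝ) (hw : ∀ i, 0 < w i) (hsum : ∑ i, w i = 1)
    (m s : Fin n → ℝ) (hs : ∀ i, 0 < s i)
    (hne : ∃ i j, i ≠ j ∧ m i * s j ≠ m j * s i) :
    ∑ i, w i * (1 - (m i) ^ 2 / s i) <
      1 - (∑ i, w i * m i) ^ 2 / (∑ i, w i * s i) := by
  obtain ⟨i0, j0, hij, hprop⟩ := hne
  set M := ∑ i, w i * m i with hM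
  set S := ∑ i, w i * s i with hS
  have hSpos : 0 < S := Finset.sum_pos (fun i _ => mul_pos (hw i) (hs i)) ⟨i0, Finset.mem_univ i0⟩
  set l := M / S with hl
  -- key: M^2/S < ∑ w i * (m i)^2 / s i
  have hkey : M^2 / S < ∑ i, w i * ((m i)^2 / s i) := by
    have hk : ∃ k, m k ≠ l * s k := by
      by_contra hc
      push_neg at hc
      apply hprop
      rw [hc i0, hc j0]; ring
    obtain ⟨k, hk⟩ := hk
    have hlt : ∑ i, w i * (2*l*(m i) - l^2*(s i)) < ∑ i, w i * ((m i)^2 / s i) := by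
      apply Finset.sum_lt_sum
      · intro i _
        exact mul_le_mul_of_nonneg_left (tangent_le l (m i) (s i) (hs i)) (hw i).le
      · exact ⟨k, Finset.mem_univ k, mul_lt_mul_of_pos_left (tangent_lt l (m k) (s k) (hs k) hk) (hw k)⟩
    have heq : ∑ i, w i * (2*l*(m i) - l^2*(s i)) = M^2/S := by
      have : ∑ i, w i * (2*l*(m i) - l^2*(s i)) = 2*l*M - l^2*S := by
        rw [hM, hS, Finset.mul_sum, Finset.mul_sum, ← Finset.sum_sub_distrib]
        apply Finset.sum_congr rfl; intro i _; ring
      rw [this, hl]; field_simp; ring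
    linarith
  have hexp : ∑ i, w i * (1 - (m i) ^ 2 / s i) = 1 - ∑ i, w i * ((m i)^2 / s i) := by
    simp only [mul_one_sub, Finset.sum_sub_distrib, hsum]
  rw [hexp]
  linarith
end

section
/- Let μ₁, …, μₙ be probability measures on ℝ^d, let w₁, …, wₙ be strictly positive reals with Σᵢ wᵢ = 1, and let μ = Σᵢ wᵢ μᵢ. Let g : ℝ^d → ℝ be measurable and square-integrable with respect to μ. Denote mᵢ = E_{μᵢ}[g], sᵢ = E_{μᵢ}[g²], σᵢ² = sᵢ − mᵢ², m = E_μ[g], s = E_μ[g²], σ² = s − m². Assume sᵢ > 0 for all i and that there exist indices i ≠ j with mᵢ·sⱼ ≠ mⱼ·sᵢ. Then Σᵢ wᵢ · σᵢ²/(σᵢ² + mᵢ²) < σ²/(σ² + m²); i.e., the weighted sum of the component Cantelli bounds is strictly smaller than the Cantelli bound of the mixture. -/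
open MeasureTheory

theorem cantelli_alg_aux (n : ℕ) (w m s : Fin n → ℝ) (hw : ∀ i, 0 < w i)
    (hsum : ∑ i, w i = 1) (hs : ∀ i, 0 < s i)
    (hne : ∃ i j, i ≠ j ∧ m i * s j ≠ m j * s i) :
    ∑ i, w i * ((s i - m i ^ 2) / ((s i - m i ^ 2) + m i ^ 2)) <
      ((∑ i, w i * s i) - (∑ i, w i * m i) ^ 2) /
        (((∑ i, w i * s i) - (∑ i, w i * m i) ^ 2) + (∑ i, w i * m i) ^ 2) := by
  obtain ⟨i0, j0, hij, hne0⟩ := hne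
  set S := ∑ i, w i * s i with hS
  set M := ∑ i, w i * m i with hM
  have hSpos : 0 < S :=
    Finset.sum_pos (fun i _ => mul_pos (hw i) (hs i)) ⟨i0, Finset.mem_univ _⟩
  set t := M / S with ht
  have hterm : ∀ i, w i * ((s i - m i ^ 2) / ((s i - m i ^ 2) + m i ^ 2)) =
      w i - w i * (m i ^ 2 / s i) := by
    intro i
    have hsi := (hs i).ne'
    rw [sub_add_cancel, sub_div, div_self hsi]
    ring
  have hRHS : (S - M ^ 2) / ((S - M ^ 2) + M ^ 2) = 1 - M ^ 2 / S := by
    rw [sub_add_cancel, sub_div, div_self hSpos.ne']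
  rw [Finset.sum_congr rfl (fun i _ => hterm i), Finset.sum_sub_distrib, hsum, hRHS]
  have key : M ^ 2 / S < ∑ i, w i * (m i ^ 2 / s i) := by
    have hexp : ∀ i, w i * ((m i - t * s i) ^ 2 / s i) =
        w i * (m i ^ 2 / s i) - 2 * t * (w i * m i) + t ^ 2 * (w i * s i) := by
      intro i
      have hsi := (hs i).ne'
      field_simp
      ring
    have hsumexp : ∑ i, w i * ((m i - t * s i) ^ 2 / s i) =
        (∑ i, w i * (m i ^ 2 / s i)) - M ^ 2 / S := by
      rw [Finset.sum_congr rfl (fun i _ => hexp i)]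
      rw [Finset.sum_add_distrib, Finset.sum_sub_distrib, ← Finset.mul_sum, ← Finset.mul_sum]
      rw [← hM, ← hS, ht]
      field_simp
      ring
    have hposk : ∃ k, m k - t * s k ≠ 0 := by
      by_contra h
      push_neg at h
      have hi := sub_eq_zero.mp (h i0)
      have hj := sub_eq_zero.mp (h j0)
      apply hne0
      rw [hi, hj]; ring
    obtain ⟨k, hk⟩ := hposk
    have hpos : 0 < ∑ i, w i * ((m i - t * s i) ^ 2 / s i) := by
      apply Finset.sum_pos'
      · intro i _
        exact mul_nonneg (hw i).le (div_nonneg (sq_nonneg _) (hs i).le)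
      · exact ⟨k, Finset.mem_univ _,
          mul_pos (hw k) (div_pos (by positivity) (hs k))⟩
    linarith [hsumexp ▸ hpos]
  linarith

/-- Probabilistic form of the strict part of Theorem 1: componentwise Cantelli bounds
are strictly less conservative than the Cantelli bound of the mixture. -/
theorem mixture_cantelli_strict
    (d n : ℕ)
    (μs : Fin n → Measure (Fin d → ℝ)) (hprob : ∀ i, IsProbabilityMeasure (μs i))
    (w : Fin n → ℝ) (hw : ∀ i, 0 < w i) (hsum : ∑ i, w i = 1)
    (μ : Measure (Fin d → ℝ)) (hμ : μ = ∑ i, ENNReal.ofReal (w i) • μs i)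
    (g : (Fin d → ℝ) → ℝ) (hg : Measurable g) (hg2 : MemLp g 2 μ)
    (hs : ∀ i, 0 < ∫ x, (g x) ^ 2 ∂(μs i))
    (hne : ∃ i j, i ≠ j ∧
      (∫ x, g x ∂(μs i)) * (∫ x, (g x) ^ 2 ∂(μs j)) ≠
        (∫ x, g x ∂(μs j)) * (∫ x, (g x) ^ 2 ∂(μs i))) :
    ∑ i, w i *
        ((∫ x, (g x) ^ 2 ∂(μs i) - (∫ x, g x ∂(μs i)) ^ 2) /
          ((∫ x, (g x) ^ 2 ∂(μs i) - (∫ x, g x ∂(μs i)) ^ 2) + (∫ x, g x ∂(μs i)) ^ 2)) <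
      (∫ x, (g x) ^ 2 ∂μ - (∫ x, g x ∂μ) ^ 2) /
        ((∫ x, (g x) ^ 2 ∂μ - (∫ x, g x ∂μ) ^ 2) + (∫ x, g x ∂μ) ^ 2) := by
  have hci : ∀ i, ENNReal.ofReal (w i) ≠ 0 := fun i => by
    simp [ENNReal.ofReal_eq_zero, not_le, hw i]
  have hmem : ∀ i, MemLp g 2 (μs i) := by
    intro i
    have hle : ENNReal.ofReal (w i) • μs i ≤ μ := by
      rw [hμ]
      intro u
      rw [Measure.finset_sum_apply]
      exact Finset.single_le_sum (f := fun j => (ENNReal.ofReal (w j) • μs j) u)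
        (fun j _ => zero_le) (Finset.mem_univ i)
    have h1 : MemLp g 2 (ENNReal.ofReal (w i) • μs i) := hg2.mono_measure hle
    have h2 := h1.smul_measure (c := (ENNReal.ofReal (w i))⁻¹)
      (ENNReal.inv_ne_top.mpr (hci i))
    rwa [smul_smul, ENNReal.inv_mul_cancel (hci i) ENNReal.ofReal_ne_top, one_smul] at h2
  have hint1 : ∀ i, Integrable g (μs i) := fun i =>
    (hmem i).integrable (by norm_num)
  have hint2 : ∀ i, Integrable (fun x => (g x) ^ 2) (μs i) := fun i =>
    (hmem i).integrable_sq
  have hm : ∫ x, g x ∂μ = ∑ i, w i * ∫ x, g x ∂(μs i) := by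
    rw [hμ, integral_finset_sum_measure (fun i _ => (hint1 i).smul_measure ENNReal.ofReal_ne_top)]
    refine Finset.sum_congr rfl fun i _ => ?_
    rw [integral_smul_measure, ENNReal.toReal_ofReal (hw i).le, smul_eq_mul]
  have hsq : ∫ x, (g x) ^ 2 ∂μ = ∑ i, w i * ∫ x, (g x) ^ 2 ∂(μs i) := by
    rw [hμ, integral_finset_sum_measure (fun i _ => (hint2 i).smul_measure ENNReal.ofReal_ne_top)]
    refine Finset.sum_congr rfl fun i _ => ?_
    rw [integral_smul_measure, ENNReal.toReal_ofReal (hw i).le, smul_eq_mul]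
  rw [hm, hsq]
  exact cantelli_alg_aux n w (fun i => ∫ x, g x ∂(μs i)) (fun i => ∫ x, (g x) ^ 2 ∂(μs i))
    hw hsum hs hne
end
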